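/- Let V be a set of n points chosen independently and uniformly at random from the unit square [0,1]². Then with probability tending to 1 as n → ∞, the weight of the minimum spanning tree of V is Ω(√n); concretely, there exist constants c > 0 and n₀ such that for n ≥ n₀, P(ω(MST(V)) ≥ c√n) ≥ 1 − 1/n. -/

import Mathlib

open scoped Classical
open MeasureTheory

/-- The weight of a minimum spanning tree of the points `x 0, …, x (n-1)` of a
metric space: the infimum, over all connected graphs on the index set, of the
total weight of the edges (weighted by the metric distances). -/
noncomputable def mstWeight {n : ℕ} {E : Type*} [MetricSpace E]
    (x : Fin n → E) : ℝ :=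
  sInf { W : ℝ | ∃ G : SimpleGraph (Fin n), G.Connected ∧
    W = ∑ e : Sym2 (Fin n),
      if e ∈ G.edgeSet then
        Sym2.lift ⟨fun a b => dist (x a) (x b),
          fun a b => dist_comm (x a) (x b)⟩ e
      else 0 }

/-- The unit square in the Euclidean plane. -/
def unitSquare : Set (EuclideanSpace ℝ (Fin 2)) :=
  {p | ∀ i : Fin 2, p i ∈ Set.Icc (0:ℝ) 1}

namespace Stmt15aux

abbrev E2 := EuclideanSpace ℝ (Fin 2)

lemma measurable_coord (i : Fin 2) : Measurable fun p : E2 => p i :=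
  (measurable_pi_apply i).comp (MeasurableEquiv.toLp 2 (Fin 2 → ℝ)).symm.measurable

lemma coord_le_dist (p q : E2) (i : Fin 2) : |p i - q i| ≤ dist p q := by
  rw [EuclideanSpace.dist_eq]
  have h1 : |p i - q i| = Real.sqrt (dist (p i) (q i) ^ 2) := by
    rw [Real.sqrt_sq dist_nonneg, Real.dist_eq]
  rw [h1]
  exact Real.sqrt_le_sqrt (Finset.single_le_sum
    (f := fun j => dist (p j) (q j) ^ 2) (fun j _ => sq_nonneg _) (Finset.mem_univ i))

lemma vol_box (I : Fin 2 → Set ℝ) (hI : ∀ i, MeasurableSet (I i)) :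
    volume {p : E2 | ∀ i, p i ∈ I i} = ∏ i, volume (I i) := by
  have hmp := (EuclideanSpace.volume_preserving_symm_measurableEquiv_toLp (Fin 2)).symm
  have hpre : (MeasurableEquiv.toLp 2 (Fin 2 → ℝ)).symm.symm ⁻¹' {p : E2 | ∀ i, p i ∈ I i}
      = Set.pi Set.univ I := by
    ext f
    simp only [Set.mem_preimage, Set.mem_setOf_eq, Set.mem_univ_pi]
    constructor
    · intro h i; simpa [MeasurableEquiv.coe_toLp] using h i
    · intro h i; simpa [MeasurableEquiv.coe_toLp] using h i
  have hmeas : MeasurableSet {p : E2 | ∀ i, p i ∈ I i} := by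
    have : {p : E2 | ∀ i, p i ∈ I i} = ⋂ i, (fun p : E2 => p i) ⁻¹' (I i) := by
      ext p; simp
    rw [this]
    exact MeasurableSet.iInter fun i => (measurable_coord i) (hI i)
  rw [← hmp.measure_preimage hmeas.nullMeasurableSet, hpre, volume_pi_pi]

lemma vol_unitSquare : volume unitSquare = 1 := by
  have : unitSquare = {p : E2 | ∀ i, p i ∈ Set.Icc (0:ℝ) 1} := rfl
  rw [this, vol_box _ (fun _ => measurableSet_Icc)]
  simp [Real.volume_Icc]



noncomputable def tt (k : ℕ) : ℝ := 1 / (3 * k)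

lemma tt_pos {k : ℕ} (hk : 1 ≤ k) : 0 < tt k := by
  have : (0:ℝ) < 3 * k := by positivity
  exact div_pos one_pos this

lemma tt_mul_3k {k : ℕ} (hk : 1 ≤ k) : 3 * (k:ℝ) * tt k = 1 := by
  have : (3:ℝ) * k ≠ 0 := by positivity
  unfold tt
  field_simp

def SS (k : ℕ) (j : Fin k × Fin k) : Set E2 :=
  {p | p 0 ∈ Set.Ico (3 * (j.1 : ℝ) * tt k) (3 * (j.1 : ℝ) * tt k + 3 * tt k) ∧
       p 1 ∈ Set.Ico (3 * (j.2 : ℝ) * tt k) (3 * (j.2 : ℝ) * tt k + 3 * tt k)}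

def CC (k : ℕ) (j : Fin k × Fin k) : Set E2 :=
  {p | p 0 ∈ Set.Ico (3 * (j.1 : ℝ) * tt k + tt k) (3 * (j.1 : ℝ) * tt k + 2 * tt k) ∧
       p 1 ∈ Set.Ico (3 * (j.2 : ℝ) * tt k + tt k) (3 * (j.2 : ℝ) * tt k + 2 * tt k)}

lemma CC_subset_SS {k : ℕ} (hk : 1 ≤ k) (j : Fin k × Fin k) : CC k j ⊆ SS k j := by
  have ht := tt_pos hk
  rintro p ⟨⟨h1, h2⟩, ⟨h3, h4⟩⟩
  exact ⟨⟨by linarith, by linarith⟩, ⟨by linarith, by linarith⟩⟩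

lemma ico_unique {t : ℝ} (ht : 0 < t) {a b : ℕ} {z : ℝ}
    (ha1 : 3*a*t ≤ z) (ha2 : z < 3*a*t+3*t) (hb1 : 3*b*t ≤ z) (hb2 : z < 3*b*t+3*t) :
    a = b := by
  by_contra h
  rcases Nat.lt_or_ge a b with hl | hg
  · have h1 : (a:ℝ) + 1 ≤ b := by exact_mod_cast hl
    nlinarith
  · have hg' : b < a := by omega
    have h1 : (b:ℝ) + 1 ≤ a := by exact_mod_cast hg'
    nlinarith

lemma SS_disjoint {k : ℕ} (hk : 1 ≤ k) :
    ∀ ⦃j j' : Fin k × Fin k⦄, j ≠ j' → ∀ p, p ∈ SS k j → p ∉ SS k j' := by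
  have ht := tt_pos hk
  rintro j j' hne p ⟨⟨h1, h2⟩, ⟨h3, h4⟩⟩ ⟨⟨h5, h6⟩, ⟨h7, h8⟩⟩
  apply hne
  have e1 : (j.1 : ℕ) = (j'.1 : ℕ) := ico_unique ht h1 h2 h5 h6
  have e2 : (j.2 : ℕ) = (j'.2 : ℕ) := ico_unique ht h3 h4 h7 h8
  ext
  · exact e1
  · exact e2

lemma CC_sep {k : ℕ} (hk : 1 ≤ k) (j : Fin k × Fin k) :
    ∀ p ∈ CC k j, ∀ q, q ∉ SS k j → tt k ≤ dist p q := by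
  have ht := tt_pos hk
  rintro p ⟨⟨h1, h2⟩, ⟨h3, h4⟩⟩ q hq
  have habs : tt k ≤ |p 0 - q 0| ∨ tt k ≤ |p 1 - q 1| := by
    by_contra hcon
    push_neg at hcon
    obtain ⟨c0, c1⟩ := hcon
    rw [abs_lt] at c0 c1
    exact hq ⟨⟨by linarith [c0.1, c0.2], by linarith⟩, ⟨by linarith, by linarith⟩⟩
  rcases habs with h | h
  · exact le_trans h (coord_le_dist p q 0)
  · exact le_trans h (coord_le_dist p q 1)

lemma CC_subset_unitSquare {k : ℕ} (hk : 1 ≤ k) (j : Fin k × Fin k) :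
    CC k j ⊆ unitSquare := by
  have ht := tt_pos hk
  have h3k := tt_mul_3k hk
  rintro p ⟨⟨h1, h2⟩, ⟨h3, h4⟩⟩
  have hb1 : (j.1 : ℝ) + 1 ≤ k := by exact_mod_cast j.1.isLt
  have hb2 : (j.2 : ℝ) + 1 ≤ k := by exact_mod_cast j.2.isLt
  intro i
  match i with
  | 0 =>
    constructor
    · have : 0 ≤ 3 * (j.1 : ℝ) * tt k := by positivity
      linarith
    · nlinarith
  | 1 =>
    constructor
    · have : 0 ≤ 3 * (j.2 : ℝ) * tt k := by positivity
      linarith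
    · nlinarith

lemma CC_measurable {k : ℕ} (j : Fin k × Fin k) : MeasurableSet (CC k j) := by
  have : CC k j = (fun p : E2 => p 0) ⁻¹' (Set.Ico _ _) ∩
      (fun p : E2 => p 1) ⁻¹' (Set.Ico _ _) := rfl
  rw [this]
  exact ((measurable_coord 0) measurableSet_Ico).inter ((measurable_coord 1) measurableSet_Ico)

lemma CC_volume {k : ℕ} (hk : 1 ≤ k) (j : Fin k × Fin k) :
    volume (CC k j) = ENNReal.ofReal (tt k) * ENNReal.ofReal (tt k) := by
  have ht := tt_pos hk
  have hset : CC k j = {p : E2 | ∀ i : Fin 2,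
      p i ∈ (![Set.Ico (3 * (j.1 : ℝ) * tt k + tt k) (3 * (j.1 : ℝ) * tt k + 2 * tt k),
               Set.Ico (3 * (j.2 : ℝ) * tt k + tt k) (3 * (j.2 : ℝ) * tt k + 2 * tt k)] : Fin 2 → Set ℝ) i} := by
    ext p
    simp only [Set.mem_setOf_eq, Fin.forall_fin_two]
    rfl
  rw [hset, vol_box _ ?hm]
  · rw [Fin.prod_univ_two]
    simp only [Matrix.cons_val_zero, Matrix.cons_val_one, Matrix.head_cons, Real.volume_Ico]
    congr 1 <;> ring_nf
  · intro i
    match i with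
    | 0 => exact measurableSet_Ico
    | 1 => exact measurableSet_Ico

noncomputable def wfun {N : ℕ} {E : Type*} [MetricSpace E] (x : Fin N → E) :
    Sym2 (Fin N) → ℝ :=
  Sym2.lift ⟨fun a b => dist (x a) (x b), fun a b => dist_comm (x a) (x b)⟩

lemma wfun_mk {N : ℕ} {E : Type*} [MetricSpace E] (x : Fin N → E) (a b : Fin N) :
    wfun x s(a, b) = dist (x a) (x b) := rfl

lemma wfun_nonneg {N : ℕ} {E : Type*} [MetricSpace E] (x : Fin N → E) (e : Sym2 (Fin N)) :
    0 ≤ wfun x e := by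
  induction e using Sym2.ind with
  | _ a b => exact dist_nonneg

lemma crossing_sub {N : ℕ} {E : Type*} [MetricSpace E] (x : Fin N → E)
    {G : SimpleGraph (Fin N)} (Sset : Set E) :
    ∀ {a b : Fin N} (W : G.Walk a b), W.IsTrail → x b ∉ Sset →
    ∃ (c : Fin N) (F : Finset (Sym2 (Fin N))),
      x c ∉ Sset ∧ ↑F ⊆ G.edgeSet ∧ (∀ e ∈ F, ∃ v, v ∈ e ∧ x v ∈ Sset) ∧
      (∀ e ∈ F, e ∈ W.edges) ∧ dist (x a) (x c) ≤ ∑ e ∈ F, wfun x e := by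
  intro a b W
  induction W with
  | nil =>
    intro _ hb
    exact ⟨_, ∅, hb, by simp, by simp, by simp, by simp⟩
  | @cons u v b huv W ih =>
    intro hT hb
    by_cases ha : x u ∈ Sset
    · obtain ⟨hT', hne⟩ := (SimpleGraph.Walk.isTrail_cons huv W).mp hT
      obtain ⟨c, F, hc, hFE, hFS, hFW, hd⟩ := ih hT' hb
      have hnotmem : s(u, v) ∉ F := fun hmem => hne (hFW _ hmem)
      refine ⟨c, insert s(u, v) F, hc, ?_, ?_, ?_, ?_⟩
      · intro e he
        simp only [Finset.coe_insert, Set.mem_insert_iff, Finset.mem_coe] at he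
        rcases he with rfl | he
        · exact huv
        · exact hFE he
      · intro e he
        rcases Finset.mem_insert.mp he with rfl | he
        · exact ⟨u, by simp, ha⟩
        · exact hFS e he
      · intro e he
        rcases Finset.mem_insert.mp he with rfl | he
        · simp [SimpleGraph.Walk.edges_cons]
        · simp [SimpleGraph.Walk.edges_cons, hFW e he]
      · rw [Finset.sum_insert hnotmem, wfun_mk]
        calc dist (x u) (x c) ≤ dist (x u) (x v) + dist (x v) (x c) := dist_triangle _ _ _
        _ ≤ _ := by linarith
    · exact ⟨u, ∅, ha, by simp, by simp, by simp, by simp⟩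

lemma crossing {N : ℕ} {E : Type*} [MetricSpace E] (x : Fin N → E)
    {G : SimpleGraph (Fin N)} (hG : G.Connected) {Cset Sset : Set E} {t : ℝ}
    (hsep : ∀ p ∈ Cset, ∀ q, q ∉ Sset → t ≤ dist p q)
    {a b : Fin N} (ha : x a ∈ Cset) (hb : x b ∉ Sset) :
    ∃ F : Finset (Sym2 (Fin N)), ↑F ⊆ G.edgeSet ∧
      (∀ e ∈ F, ∃ v, v ∈ e ∧ x v ∈ Sset) ∧ t ≤ ∑ e ∈ F, wfun x e := by
  obtain ⟨W⟩ := hG.preconnected a b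
  obtain ⟨c, F, hc, hFE, hFS, _, hd⟩ :=
    crossing_sub x Sset W.bypass W.bypass_isPath.isTrail hb
  exact ⟨F, hFE, hFS, le_trans (hsep _ ha _ hc) hd⟩

lemma det_bound {N : ℕ} {E : Type*} [MetricSpace E] (x : Fin N → E)
    {ι : Type*} [DecidableEq ι] (Cs Ss : ι → Set E)
    (hCS : ∀ j, Cs j ⊆ Ss j)
    (hdisj : ∀ ⦃j j'⦄, j ≠ j' → ∀ p, p ∈ Ss j → p ∉ Ss j')
    {t : ℝ} (ht : 0 ≤ t)
    (hsep : ∀ j, ∀ p ∈ Cs j, ∀ q, q ∉ Ss j → t ≤ dist p q)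
    {G : SimpleGraph (Fin N)} (hG : G.Connected)
    (J : Finset ι) (hJ2 : 2 ≤ J.card)
    (hocc : ∀ j ∈ J, ∃ i, x i ∈ Cs j) :
    t * J.card / 2 ≤ ∑ e : Sym2 (Fin N), if e ∈ G.edgeSet then wfun x e else 0 := by
  classical
  have key : ∀ j : ι, ∃ F : Finset (Sym2 (Fin N)),
      (j ∈ J → (↑F ⊆ G.edgeSet ∧ (∀ e ∈ F, ∃ v, v ∈ e ∧ x v ∈ Ss j) ∧
        t ≤ ∑ e ∈ F, wfun x e)) := by
    intro j
    by_cases hj : j ∈ J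
    · obtain ⟨i, hi⟩ := hocc j hj
      obtain ⟨j', hj', hne⟩ := Finset.exists_mem_ne (s := J) (by omega) j
      obtain ⟨i', hi'⟩ := hocc j' hj'
      have hout : x i' ∉ Ss j := hdisj hne _ (hCS j' hi')
      obtain ⟨F, h1, h2, h3⟩ := crossing x hG (hsep j) hi hout
      exact ⟨F, fun _ => ⟨h1, h2, h3⟩⟩
    · exact ⟨∅, fun h => absurd h hj⟩
  choose Fs hFs using key
  have step1 : t * J.card ≤ ∑ j ∈ J, ∑ e ∈ Fs j, wfun x e := by
    calc t * J.card = ∑ _j ∈ J, t := by rw [Finset.sum_const, nsmul_eq_mul, mul_comm]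
    _ ≤ _ := Finset.sum_le_sum fun j hj => (hFs j hj).2.2
  have hper : ∀ e : Sym2 (Fin N),
      (∑ j ∈ J, if e ∈ Fs j then wfun x e else 0) ≤
        2 * (if e ∈ G.edgeSet then wfun x e else 0) := by
    intro e
    have hcard : (J.filter fun j => e ∈ Fs j).card ≤ 2 := by
      induction e using Sym2.ind with
      | _ α β =>
        have hsub : (J.filter fun j => s(α, β) ∈ Fs j) ⊆
            (J.filter fun j => x α ∈ Ss j) ∪ (J.filter fun j => x β ∈ Ss j) := by
          intro j hj
          rw [Finset.mem_filter] at hj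
          obtain ⟨v, hv, hvS⟩ := (hFs j hj.1).2.1 _ hj.2
          rcases Sym2.mem_iff.mp hv with rfl | rfl
          · exact Finset.mem_union_left _ (Finset.mem_filter.mpr ⟨hj.1, hvS⟩)
          · exact Finset.mem_union_right _ (Finset.mem_filter.mpr ⟨hj.1, hvS⟩)
        have h1 : (J.filter fun j => x α ∈ Ss j).card ≤ 1 := by
          apply Finset.card_le_one.mpr
          intro j hj j' hj'
          rw [Finset.mem_filter] at hj hj'
          by_contra hne
          exact hdisj hne _ hj.2 hj'.2
        have h2 : (J.filter fun j => x β ∈ Ss j).card ≤ 1 := by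
          apply Finset.card_le_one.mpr
          intro j hj j' hj'
          rw [Finset.mem_filter] at hj hj'
          by_contra hne
          exact hdisj hne _ hj.2 hj'.2
        calc (J.filter fun j => s(α, β) ∈ Fs j).card
            ≤ ((J.filter fun j => x α ∈ Ss j) ∪ (J.filter fun j => x β ∈ Ss j)).card :=
              Finset.card_le_card hsub
        _ ≤ _ := Finset.card_union_le _ _
        _ ≤ 2 := by omega
    by_cases he : e ∈ G.edgeSet
    · have : (∑ j ∈ J, if e ∈ Fs j then wfun x e else 0) =
          ((J.filter fun j => e ∈ Fs j).card : ℝ) * wfun x e := by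
        rw [← Finset.sum_filter, Finset.sum_const, nsmul_eq_mul]
      rw [this, if_pos he]
      have h2r : ((J.filter fun j => e ∈ Fs j).card : ℝ) ≤ 2 := by exact_mod_cast hcard
      exact mul_le_mul_of_nonneg_right h2r (wfun_nonneg x e)
    · have hz : ∀ j ∈ J, (if e ∈ Fs j then wfun x e else 0) = 0 := by
        intro j hj
        rw [if_neg]
        intro hmem
        exact he ((hFs j hj).1 hmem)
      rw [Finset.sum_congr rfl hz, Finset.sum_const, if_neg he]
      simp
  have step2 : ∑ j ∈ J, ∑ e ∈ Fs j, wfun x e ≤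
      2 * ∑ e : Sym2 (Fin N), if e ∈ G.edgeSet then wfun x e else 0 := by
    have hrw : ∀ j ∈ J, ∑ e ∈ Fs j, wfun x e =
        ∑ e : Sym2 (Fin N), if e ∈ Fs j then wfun x e else 0 := by
      intro j hj
      rw [← Finset.sum_filter]
      congr 1
      simp [Finset.filter_univ_mem]
    rw [Finset.sum_congr rfl hrw, Finset.sum_comm, Finset.mul_sum]
    exact Finset.sum_le_sum fun e _ => hper e
  linarith

end Stmt15aux

set_option maxHeartbeats 3000000 in
open Stmt15aux in
/-- For `n` points chosen independently and uniformly at random from the unit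
square, with high probability the weight of a minimum spanning tree is
`Ω(√n)`: there are `c > 0` and `n₀` such that for all `n ≥ n₀`, with
probability at least `1 - 1/n` we have `ω(MST) ≥ c·√n`. -/
theorem stmt_15 :
    ∃ c : ℝ, 0 < c ∧ ∃ n₀ : ℕ, ∀ n : ℕ, n₀ ≤ n →
      (1 : ENNReal) - 1 / n ≤
        Measure.pi (fun _ : Fin n =>
            (volume : Measure (EuclideanSpace ℝ (Fin 2))).restrict unitSquare)
          {x | c * Real.sqrt n ≤ mstWeight x} := by
  refine ⟨1/240, by norm_num, 10000, fun n hn => ?_⟩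
  classical
  -- basic numerology
  set s : ℕ := Nat.sqrt n with hs_def
  set k : ℕ := s / 10 with hk_def
  have hs100 : 100 ≤ s := Nat.le_sqrt.mpr (by omega)
  have hsn : s * s ≤ n := by have := Nat.sqrt_le' n; simpa [pow_two] using this
  have hns : n < (s+1) * (s+1) := Nat.lt_succ_sqrt n
  have hk10 : 10 ≤ k := by omega
  have hk1 : 1 ≤ k := by omega
  have h10k : 10 * k ≤ s ∧ s ≤ 10 * k + 9 := by omega
  set m : ℕ := n / 100 with hm_def
  have hm2 : 2 ≤ m := by omega
  have hm100 : 100 * m ≤ n ∧ n ≤ 100 * m + 99 := by omega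
  have hkkm : k * k ≤ m := by
    have h1 : (10 * k) * (10 * k) ≤ n := le_trans (Nat.mul_le_mul h10k.1 h10k.1) hsn
    have h2 : (10 * k) * (10 * k) = 100 * (k * k) := by ring
    omega
  set u : ℕ := (k * k + 1) / 2 with hu_def
  have hkk1 : 1 ≤ k * k := Nat.one_le_iff_ne_zero.mpr (by positivity)
  have hu1 : 1 ≤ u := by omega
  have huk : u ≤ k * k := by omega
  have h2u : k * k ≤ 2 * u ∧ 2 * u ≤ k * k + 1 := by omega
  have hn0 : 0 < n := by omega
  haveI : Nonempty (Fin n) := ⟨⟨0, hn0⟩⟩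
  have httpos := tt_pos hk1
  have htt3k := tt_mul_3k hk1
  -- measures
  set μ : Measure E2 := volume.restrict unitSquare with hμ_def
  haveI hprob : IsProbabilityMeasure μ := ⟨by
    rw [hμ_def, Measure.restrict_apply_univ]; exact vol_unitSquare⟩
  set ν : Measure (Fin n → E2) := Measure.pi (fun _ : Fin n => μ) with hν_def
  -- μ of a center square
  have hCCμ : ∀ j : Fin k × Fin k, μ (CC k j) = ENNReal.ofReal (tt k * tt k) := by
    intro j
    rw [hμ_def, Measure.restrict_apply (CC_measurable j),
      Set.inter_eq_left.mpr (CC_subset_unitSquare hk1 j), CC_volume hk1 j,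
      ENNReal.ofReal_mul httpos.le]
  -- the bad event
  set BadT : Finset (Fin k × Fin k) → Set (Fin n → E2) :=
    fun T => Set.pi Set.univ (fun _ : Fin n => (⋃ j ∈ T, CC k j)ᶜ) with hBadT_def
  set Bad : Set (Fin n → E2) :=
    ⋃ T ∈ Finset.powersetCard u (Finset.univ : Finset (Fin k × Fin k)), BadT T with hBad_def
  have hUmeas : ∀ T : Finset (Fin k × Fin k), MeasurableSet (⋃ j ∈ T, CC k j) :=
    fun T => T.measurableSet_biUnion (fun j _ => CC_measurable j)
  have hBadTmeas : ∀ T, MeasurableSet (BadT T) := by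
    intro T
    exact MeasurableSet.univ_pi (fun _ => (hUmeas T).compl)
  have hBadMeas : MeasurableSet Bad := by
    apply Finset.measurableSet_biUnion
    exact fun T _ => hBadTmeas T
  -- probability of one bad event
  have hBadTbound : ∀ T ∈ Finset.powersetCard u (Finset.univ : Finset (Fin k × Fin k)),
      ν (BadT T) ≤ ENNReal.ofReal ((17:ℝ)/18) ^ n := by
    intro T hT
    have hTcard : T.card = u := (Finset.mem_powersetCard.mp hT).2
    have hdisjT : Set.PairwiseDisjoint (↑T) (CC k) := by
      intro a _ b _ hab
      exact Set.disjoint_left.mpr fun p hpa hpb =>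
        SS_disjoint hk1 hab p (CC_subset_SS hk1 a hpa) (CC_subset_SS hk1 b hpb)
    have hsum : μ (⋃ j ∈ T, CC k j) = ENNReal.ofReal (u * (tt k * tt k)) := by
      rw [measure_biUnion_finset hdisjT (fun j _ => CC_measurable j)]
      rw [Finset.sum_congr rfl (fun j _ => hCCμ j), Finset.sum_const, hTcard,
        nsmul_eq_mul, ← ENNReal.ofReal_natCast u,
        ← ENNReal.ofReal_mul (Nat.cast_nonneg u)]
    have hcompl : μ ((⋃ j ∈ T, CC k j)ᶜ) ≤ ENNReal.ofReal ((17:ℝ)/18) := by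
      rw [measure_compl (hUmeas T) (measure_ne_top μ _), measure_univ, hsum]
      rw [tsub_le_iff_right, ← ENNReal.ofReal_add (by norm_num)
        (by positivity), ← ENNReal.ofReal_one]
      apply ENNReal.ofReal_le_ofReal
      -- 1 ≤ 17/18 + u * tt²
      have hkpos : (0:ℝ) < k := by exact_mod_cast hk1
      have hq : ((k:ℝ) * k) ≤ 2 * u := by exact_mod_cast h2u.1
      have httval : tt k = 1 / (3 * (k:ℝ)) := eq_one_div_of_mul_eq_one_left (by linarith [htt3k, mul_comm (tt k) (3 * (k:ℝ))])
      have hut : (1:ℝ)/18 ≤ u * (tt k * tt k) := by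
        have h1 : (1:ℝ)/18 ≤ u / (9 * ((k:ℝ) * k)) := by
          rw [div_le_div_iff₀ (by norm_num) (by positivity)]
          nlinarith
        have h2 : (u:ℝ) / (9 * ((k:ℝ) * k)) = u * (tt k * tt k) := by
          rw [httval, div_mul_div_comm, one_mul, mul_one_div]
          congr 1
          ring
        linarith [h1, h2 ▸ h1]
      linarith
    rw [hν_def, hBadT_def]
    simp only
    rw [Measure.pi_pi]
    rw [Finset.prod_const, Finset.card_univ, Fintype.card_fin]
    exact pow_le_pow_left₀ zero_le hcompl n
    -- union bound
  have hn0' : (0:ℝ) < n := by exact_mod_cast hn0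
  have hBadBound : ν Bad ≤ 1 / (n : ENNReal) := by
    have h1 : ν Bad ≤ ∑ T ∈ Finset.powersetCard u (Finset.univ : Finset (Fin k × Fin k)),
        ν (BadT T) := by
      rw [hBad_def]
      exact measure_biUnion_finset_le _ _
    have h2 : ∑ T ∈ Finset.powersetCard u (Finset.univ : Finset (Fin k × Fin k)), ν (BadT T)
        ≤ ((k*k).choose u : ENNReal) * ENNReal.ofReal ((17:ℝ)/18) ^ n := by
      calc ∑ T ∈ Finset.powersetCard u (Finset.univ : Finset (Fin k × Fin k)), ν (BadT T)
          ≤ ∑ _T ∈ Finset.powersetCard u (Finset.univ : Finset (Fin k × Fin k)),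
            ENNReal.ofReal ((17:ℝ)/18) ^ n := Finset.sum_le_sum hBadTbound
      _ = ((k*k).choose u : ENNReal) * ENNReal.ofReal ((17:ℝ)/18) ^ n := by
          rw [Finset.sum_const, Finset.card_powersetCard, Finset.card_univ, nsmul_eq_mul]
          congr 2
          simp [Fintype.card_prod]
    have hchoose : ((k*k).choose u : ℕ) ≤ 2 ^ (k*k) := by
      calc (k*k).choose u ≤ ∑ i ∈ Finset.range (k*k+1), (k*k).choose i :=
        Finset.single_le_sum (fun i _ => Nat.zero_le _) (Finset.mem_range.mpr (by omega))
      _ = 2 ^ (k*k) := Nat.sum_range_choose (k*k)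
    have hreal : (n:ℝ) * ((2:ℝ) ^ (k*k) * ((17:ℝ)/18) ^ n) ≤ 1 := by
      have hb0 : ((17:ℝ)/18) ^ n ≤ ((1:ℝ)/250) ^ m := by
        calc ((17:ℝ)/18) ^ n ≤ ((17:ℝ)/18) ^ (100 * m) :=
          pow_le_pow_of_le_one (by norm_num) (by norm_num) hm100.1
        _ = (((17:ℝ)/18) ^ 100) ^ m := by rw [pow_mul]
        _ ≤ ((1:ℝ)/250) ^ m := pow_le_pow_left₀ (by positivity) (by norm_num) m
      have hb1 : (2:ℝ) ^ (k*k) ≤ 2 ^ m := pow_le_pow_right₀ (by norm_num) hkkm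
      have hb2 : (n:ℝ) ≤ 100 * 2 ^ m := by
        have hc1 : (m:ℝ) + 1 ≤ 2 ^ m := by exact_mod_cast Nat.lt_two_pow_self (n := m)
        have hc2 : (n:ℝ) ≤ 100 * ((m:ℝ) + 1) := by
          have : n ≤ 100 * (m + 1) := by omega
          exact_mod_cast this
        nlinarith
      calc (n:ℝ) * ((2:ℝ) ^ (k*k) * ((17:ℝ)/18) ^ n)
          ≤ (100 * 2 ^ m) * ((2:ℝ) ^ m * ((1:ℝ)/250) ^ m) := by
            apply mul_le_mul hb2 (mul_le_mul hb1 hb0 (by positivity) (by positivity))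
              (by positivity) (by positivity)
      _ = 100 * ((2*(2*(1/250))) : ℝ) ^ m := by rw [mul_pow, mul_pow]; ring
      _ ≤ 100 * ((2*(2*(1/250))) : ℝ) ^ 2 := by
            apply mul_le_mul_of_nonneg_left _ (by norm_num)
            exact pow_le_pow_of_le_one (by norm_num) (by norm_num) hm2
      _ ≤ 1 := by norm_num
    have hconv : ((k*k).choose u : ENNReal) * ENNReal.ofReal ((17:ℝ)/18) ^ n
        ≤ 1 / (n : ENNReal) := by
      rw [← ENNReal.ofReal_natCast ((k*k).choose u),
        ← ENNReal.ofReal_pow (by norm_num : (0:ℝ) ≤ 17/18),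
        ← ENNReal.ofReal_mul (Nat.cast_nonneg _),
        one_div, ← ENNReal.ofReal_natCast n, ← ENNReal.ofReal_inv_of_pos hn0']
      apply ENNReal.ofReal_le_ofReal
      have hch : (((k*k).choose u : ℕ):ℝ) ≤ (2:ℝ)^(k*k) := by
        have := hchoose
        exact_mod_cast this
      have hp : (0:ℝ) ≤ ((17:ℝ)/18) ^ n := by positivity
      rw [inv_eq_one_div, le_div_iff₀ hn0']
      nlinarith [mul_le_mul_of_nonneg_right (mul_le_mul_of_nonneg_right hch hp) hn0'.le]
    exact le_trans h1 (le_trans h2 hconv)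
  -- the good event gives a large MST
  have hkk100 : 100 ≤ k * k := Nat.mul_le_mul hk10 hk10
  have hGoodSub : Badᶜ ⊆ {x : Fin n → E2 | (1/240 : ℝ) * Real.sqrt n ≤ mstWeight x} := by
    intro x hx
    simp only [Set.mem_setOf_eq]
    set J : Finset (Fin k × Fin k) := Finset.univ.filter (fun j => ∃ i, x i ∈ CC k j)
      with hJ_def
    set Jc : Finset (Fin k × Fin k) :=
      Finset.univ.filter (fun j => ¬ ∃ i, x i ∈ CC k j) with hJc_def
    have hsplit : J.card + Jc.card = k * k := by
      rw [hJ_def, hJc_def, Finset.card_filter_add_card_filter_not]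
      simp [Finset.card_univ, Fintype.card_prod]
    have hcompl_card : Jc.card < u := by
      by_contra hge
      push_neg at hge
      obtain ⟨T, hTsub, hTcard⟩ := Finset.exists_subset_card_eq hge
      apply hx
      rw [hBad_def]
      have hTmem : T ∈ Finset.powersetCard u (Finset.univ : Finset (Fin k × Fin k)) :=
        Finset.mem_powersetCard.mpr ⟨Finset.subset_univ T, hTcard⟩
      have hxT : x ∈ BadT T := by
        refine Set.mem_univ_pi.mpr fun i => ?_
        simp only [Set.mem_compl_iff, Set.mem_iUnion]
        rintro ⟨j, hjT, hji⟩
        exact (Finset.mem_filter.mp (hTsub hjT)).2 ⟨i, hji⟩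
      exact Set.mem_biUnion hTmem hxT
    have hJcard : k*k - u + 1 ≤ J.card := by omega

    have hJ2 : 2 ≤ J.card := by omega
    apply le_csInf
    · exact ⟨_, ⊤, SimpleGraph.connected_top, rfl⟩
    · rintro W ⟨G, hG, rfl⟩
      have hocc : ∀ j ∈ J, ∃ i, x i ∈ CC k j := fun j hj => (Finset.mem_filter.mp hj).2
      have hdet := det_bound x (CC k) (SS k) (CC_subset_SS hk1) (SS_disjoint hk1)
        httpos.le (CC_sep hk1) hG J hJ2 hocc
      refine le_trans ?_ hdet
      have hns' : (n:ℝ) < ((s:ℝ)+1)*((s:ℝ)+1) := by exact_mod_cast hns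
      have hsq : Real.sqrt n ≤ (s:ℝ) + 1 := by
        have h1 : (n:ℝ) ≤ ((s:ℝ)+1)^2 := by nlinarith
        calc Real.sqrt n ≤ Real.sqrt (((s:ℝ)+1)^2) := Real.sqrt_le_sqrt h1
        _ = (s:ℝ)+1 := Real.sqrt_sq (by positivity)
      have hs20k : (s:ℝ) + 1 ≤ 20 * k := by
        have : s + 1 ≤ 20 * k := by omega
        exact_mod_cast this
      have hJR : ((k:ℝ) * k) ≤ 2 * (J.card:ℝ) := by
        have : k * k ≤ 2 * J.card := by omega
        exact_mod_cast this
      have hkpos : (0:ℝ) < k := by exact_mod_cast hk1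
      have httval : tt k = 1 / (3 * (k:ℝ)) :=
        eq_one_div_of_mul_eq_one_left (by linarith [htt3k, mul_comm (tt k) (3 * (k:ℝ))])
      have hsqnn : (0:ℝ) ≤ Real.sqrt n := Real.sqrt_nonneg _
      calc (1/240:ℝ) * Real.sqrt n ≤ (1/240) * (20 * k) := by nlinarith
      _ = (k:ℝ)/12 := by ring
      _ ≤ tt k * J.card / 2 := by
          rw [httval]
          have hrw : (1:ℝ) / (3 * (k:ℝ)) * (J.card:ℝ) / 2 = (J.card:ℝ) / (6 * k) := by
            field_simp
            ring_nf
          rw [hrw, div_le_div_iff₀ (by norm_num) (by positivity)]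
          nlinarith
  -- conclude
  have h1 : ν Badᶜ ≤ ν {x : Fin n → E2 | (1/240 : ℝ) * Real.sqrt n ≤ mstWeight x} :=
    measure_mono hGoodSub
  have h2 : ν Badᶜ = 1 - ν Bad := by
    rw [measure_compl hBadMeas (measure_ne_top _ _), measure_univ]
  calc (1:ENNReal) - 1/(n:ENNReal) ≤ 1 - ν Bad := tsub_le_tsub_left hBadBound 1
  _ = ν Badᶜ := h2.symm
  _ ≤ _ := h1
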